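/- Let I be the sequence obtained by iterating sites j = 1, ..., m and for each j, colors c = 1, ..., h, appending c whenever j is the right endpoint of a refined segment in RS[c]. For colors c ≠ c₁, let e be the right endpoint of the ℓ-th segment of RS[c], occurring at position x in I (the ℓ-th occurrence of c), and let e' ≥ e be the right endpoint of the segment of RS[c₁] containing e. Then the occurrence of c₁ in I corresponding to e' is located either at the largest position v < x holding c₁ (if c₁ < c and e' = e) or at the smallest position z > x holding c₁ (if c₁ > c, or if e' > e). -/

import Mathlib

/-- `Partitions L x y`: the list `L` of (nonempty, sorted, consecutive) integer
intervals partitions `[x, y]`. -/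
def Partitions : List (ℕ × ℕ) → ℕ → ℕ → Prop
  | [], x, y => y + 1 = x
  | (b, e) :: t, x, y => b = x ∧ b ≤ e ∧ Partitions t (e + 1) y

lemma part_bound : ∀ (L : List (ℕ × ℕ)) (x y : ℕ), Partitions L x y →
    ∀ b j, (b, j) ∈ L → x ≤ b ∧ b ≤ j
  | [], _, _, _, _, _, hm => by simp at hm
  | (b0, e0) :: t, x, y, hp, b, j, hm => by
    obtain ⟨h1, h2, h3⟩ := hp
    rcases List.mem_cons.1 hm with hh | hh
    · obtain ⟨rfl, rfl⟩ := Prod.mk.injEq .. ▸ hh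
      exact ⟨le_of_eq h1.symm, h2⟩
    · have := part_bound t (e0 + 1) y h3 b j hh
      subst h1
      exact ⟨le_trans (le_trans h2 (Nat.le_succ _)) this.1, this.2⟩

lemma part_disj : ∀ (L : List (ℕ × ℕ)) (x y : ℕ), Partitions L x y →
    ∀ s e' b j, (s, e') ∈ L → (b, j) ∈ L → s ≤ j → j ≤ e' → j = e'
  | [], _, _, _, _, _, _, _, hm, _, _, _ => by simp at hm
  | (b0, e0) :: t, x, y, hp, s, e', b, j, hm1, hm2, hle1, hle2 => by
    obtain ⟨h1, h2, h3⟩ := hp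
    rcases List.mem_cons.1 hm1 with hh1 | hh1 <;> rcases List.mem_cons.1 hm2 with hh2 | hh2
    · obtain ⟨rfl, rfl⟩ := Prod.mk.injEq .. ▸ hh1
      obtain ⟨rfl, rfl⟩ := Prod.mk.injEq .. ▸ hh2
      rfl
    · obtain ⟨rfl, rfl⟩ := Prod.mk.injEq .. ▸ hh1
      have := part_bound t (e' + 1) y h3 b j hh2
      omega
    · obtain ⟨rfl, rfl⟩ := Prod.mk.injEq .. ▸ hh2
      have := part_bound t (j + 1) y h3 s e' hh1
      omega
    · exact part_disj t (e0 + 1) y h3 s e' b j hh1 hh2 hle1 hle2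

theorem stmt16 (m h : ℕ) (RS : ℕ → List (ℕ × ℕ))
    (hpart : ∀ c, 1 ≤ c → c ≤ h → Partitions (RS c) 1 m)
    (I : List (ℕ × ℕ))
    (hsort : I.Pairwise (fun p q => p.2 < q.2 ∨ (p.2 = q.2 ∧ p.1 < q.1)))
    (hIiff : ∀ cc j, ((cc, j) ∈ I ↔ (1 ≤ cc ∧ cc ≤ h ∧ ∃ p ∈ RS cc, p.2 = j)))
    (c c₁ e e' s x w : ℕ) (hc : c ≠ c₁)
    (hx : x < I.length) (hxv : I.get ⟨x, hx⟩ = (c, e))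
    (hc₁ : 1 ≤ c₁ ∧ c₁ ≤ h)
    (hseg : (s, e') ∈ RS c₁) (hse : s ≤ e) (hee' : e ≤ e')
    (hw : w < I.length) (hwv : I.get ⟨w, hw⟩ = (c₁, e')) :
    if c₁ < c ∧ e' = e then
      w < x ∧ ∀ u (hu : u < I.length), w < u → u < x → (I.get ⟨u, hu⟩).1 ≠ c₁
    else
      x < w ∧ ∀ u (hu : u < I.length), x < u → u < w → (I.get ⟨u, hu⟩).1 ≠ c₁ := by
  have hpg := List.pairwise_iff_get.mp hsort
  have hxw : x ≠ w := by
    intro hxw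
    rw [show (⟨x, hx⟩ : Fin I.length) = ⟨w, hw⟩ from Fin.ext hxw, hwv] at hxv
    exact hc (Prod.mk.injEq .. ▸ hxv).1.symm
  split
  · rename_i hcase
    obtain ⟨hlt, rfl⟩ := hcase
    have hwx : w < x := by
      rcases lt_trichotomy w x with h' | h' | h'
      · exact h'
      · exact absurd h'.symm hxw
      · have := hpg ⟨x, hx⟩ ⟨w, hw⟩ h'
        rw [hxv, hwv] at this
        simp only [] at this
        omega
    refine ⟨hwx, fun u hu h1 h2 himp => ?_⟩
    rcases hpu : I.get ⟨u, hu⟩ with ⟨cu, ju⟩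
    rw [hpu] at himp
    simp only at himp
    have ha := hpg ⟨w, hw⟩ ⟨u, hu⟩ h1
    have hb := hpg ⟨u, hu⟩ ⟨x, hx⟩ h2
    rw [hwv, hpu] at ha
    rw [hxv, hpu] at hb
    simp only [] at ha hb
    omega
  · rename_i hcase
    have hxw' : x < w := by
      rcases lt_trichotomy x w with h' | h' | h'
      · exact h'
      · exact absurd h' hxw
      · have := hpg ⟨w, hw⟩ ⟨x, hx⟩ h'
        rw [hxv, hwv] at this
        simp only [] at this
        rcases this with h'' | h''
        · omega
        · exact absurd ⟨h''.2, h''.1⟩ hcase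
    refine ⟨hxw', fun u hu h1 h2 himp => ?_⟩
    rcases hpu : I.get ⟨u, hu⟩ with ⟨cu, ju⟩
    rw [hpu] at himp
    simp only at himp
    rw [himp] at hpu
    have ha := hpg ⟨x, hx⟩ ⟨u, hu⟩ h1
    have hb := hpg ⟨u, hu⟩ ⟨w, hw⟩ h2
    rw [hxv, hpu] at ha
    rw [hwv, hpu] at hb
    simp only [] at ha hb
    have hmem : (c₁, ju) ∈ I := hpu ▸ List.get_mem I ⟨u, hu⟩
    obtain ⟨_, _, q, hq, hq2⟩ := (hIiff c₁ ju).mp hmem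
    have hj : ju = e' :=
      part_disj (RS c₁) 1 m (hpart c₁ hc₁.1 hc₁.2) s e' q.1 ju hseg
        (by rw [← hq2]; exact hq) (by omega) (by omega)
    omega
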